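/- arXiv:1708.06548 — 4 statements merged into one kernel-verified Lean document; each statement's English description precedes it below -/
import Mathlib

section
/- Let X be a real Banach space of dimension at least 2, and let u = φ + a and v = ψ + b be continuous affine functions on X with φ ≠ ψ in X*. Let h = u ∨ v (pointwise maximum). Then a continuous affine function w satisfies w ≤ h pointwise if and only if there exists t ∈ [0,1] such that w ≤ t·u + (1−t)·v pointwise; i.e., the segment [u,v] is a minimum upper bound (in the pointwise order) for the set of continuous affine minorants of h. -/
/-- If `u = φ + a`, `v = ψ + b` are continuous affine functions with
`φ ≠ ψ` and `h = u ∨ v` (pointwise max), then a continuous affine function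
`w = ζ + d` satisfies `w ≤ h` pointwise iff there is `t ∈ [0,1]` with
`w ≤ t·u + (1−t)·v` pointwise. -/
theorem stmt_3 {X : Type*} [NormedAddCommGroup X] [NormedSpace ℝ X] [CompleteSpace X]
    (hdim : 2 ≤ Module.rank ℝ X)
    (φ ψ : X →L[ℝ] ℝ) (a b : ℝ) (hφψ : φ ≠ ψ)
    (ζ : X →L[ℝ] ℝ) (d : ℝ) :
    (∀ x : X, ζ x + d ≤ max (φ x + a) (ψ x + b)) ↔
      ∃ t : ℝ, t ∈ Set.Icc (0 : ℝ) 1 ∧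
        ∀ x : X, ζ x + d ≤ t * (φ x + a) + (1 - t) * (ψ x + b) := by
  constructor
  · intro H
    obtain ⟨z, hz⟩ : ∃ z, φ z ≠ ψ z := by
      by_contra h
      push_neg at h
      exact hφψ (ContinuousLinearMap.ext h)
    have hz' : φ z - ψ z ≠ 0 := sub_ne_zero.mpr hz
    obtain ⟨x0, hx0⟩ : ∃ x0, φ x0 - ψ x0 = 1 := by
      refine ⟨(φ z - ψ z)⁻¹ • z, ?_⟩
      simp only [map_smul, smul_eq_mul]
      field_simp
    set c : ℝ := d - b with hcdef
    set e : ℝ := a - b with hedef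
    clear_value c e
    have H' : ∀ x, (ζ x - ψ x) + c ≤ max ((φ x - ψ x) + e) 0 := by
      intro x
      have hx := H x
      rcases max_cases (φ x + a) (ψ x + b) with ⟨hm, _⟩ | ⟨hm, _⟩ <;>
        rcases max_cases ((φ x - ψ x) + e) (0 : ℝ) with ⟨hm2, _⟩ | ⟨hm2, _⟩ <;>
        simp only [hcdef, hedef] at * <;> linarith
    have hker : ∀ y, φ y - ψ y = 0 → ζ y - ψ y = 0 := by
      intro y hy
      by_contra hne
      set s : ℝ := (max e 0 - c + 1) / (ζ y - ψ y) with hsdef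
      have e2 : φ (s • y) - ψ (s • y) = 0 := by
        simp only [map_smul, smul_eq_mul]
        linear_combination s * hy
      have e1 : ζ (s • y) - ψ (s • y) = max e 0 - c + 1 := by
        simp only [map_smul, smul_eq_mul]
        rw [show s * ζ y - s * ψ y = s * (ζ y - ψ y) by ring, hsdef,
          div_mul_cancel₀ _ hne]
      have hs := H' (s • y)
      rw [e2, e1, zero_add] at hs
      rcases max_cases e (0 : ℝ) with ⟨hm, _⟩ | ⟨hm, _⟩ <;> linarith
    set t : ℝ := ζ x0 - ψ x0 with htdef
    clear_value t
    have hrep : ∀ x, ζ x - ψ x = t * (φ x - ψ x) := by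
      intro x
      have h1 : φ (x - (φ x - ψ x) • x0) - ψ (x - (φ x - ψ x) • x0) = 0 := by
        simp only [map_sub, map_smul, smul_eq_mul]
        linear_combination (-(φ x - ψ x)) * hx0
      have h2 := hker _ h1
      simp only [map_sub, map_smul, smul_eq_mul] at h2
      rw [htdef]
      linear_combination h2
    have key : ∀ r : ℝ, t * r + c ≤ max (r + e) 0 := by
      intro r
      have e2 : φ (r • x0) - ψ (r • x0) = r := by
        simp only [map_smul, smul_eq_mul]
        linear_combination r * hx0
      have e1 : ζ (r • x0) - ψ (r • x0) = t * r := by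
        simp only [map_smul, smul_eq_mul, htdef]
        ring
      have h := H' (r • x0)
      rw [e2, e1] at h
      exact h
    have ht0 : 0 ≤ t := by
      by_contra h
      push_neg at h
      have htne : t ≠ 0 := ne_of_lt h
      obtain ⟨r, hr1, hr2⟩ : ∃ r, r ≤ -e ∧ r ≤ -c / t - 1 :=
        ⟨min (-e) (-c / t - 1), min_le_left _ _, min_le_right _ _⟩
      have hk := key r
      rw [max_eq_right (by linarith)] at hk
      have hmul := mul_le_mul_of_nonpos_left hr2 (le_of_lt h)
      have heq : t * (-c / t - 1) = -c - t := by field_simp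
      rw [heq] at hmul
      linarith
    have ht1 : t ≤ 1 := by
      by_contra h
      push_neg at h
      have htne : t - 1 ≠ 0 := by intro h'; rw [sub_eq_zero] at h'; exact absurd h'.symm (ne_of_lt h)
      obtain ⟨r, hr1, hr2⟩ : ∃ r, 1 - e ≤ r ∧ (e - c) / (t - 1) + 1 ≤ r :=
        ⟨max (1 - e) ((e - c) / (t - 1) + 1), le_max_left _ _, le_max_right _ _⟩
      have hk := key r
      rw [max_eq_left (by linarith)] at hk
      have hmul := mul_le_mul_of_nonneg_left hr2 (by linarith : (0:ℝ) ≤ t - 1)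
      have heq : (t - 1) * ((e - c) / (t - 1) + 1) = e - c + (t - 1) := by
        field_simp
      rw [heq] at hmul
      linarith
    have hce : c ≤ t * e := by
      have hk := key (-e)
      rw [show (-e + e : ℝ) = 0 by ring, max_self] at hk
      nlinarith
    rw [hcdef, hedef] at hce
    refine ⟨t, ⟨ht0, ht1⟩, fun x => ?_⟩
    have hrx := hrep x
    nlinarith [hrx, hce]
  · rintro ⟨t, ⟨ht0, ht1⟩, hw⟩ x
    have := hw x
    rcases le_total (φ x + a) (ψ x + b) with h1 | h1
    · rw [max_eq_right h1]
      nlinarith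
    · rw [max_eq_left h1]
      nlinarith
end

section
/- Let V be a real vector space with dim V ≥ 2, and let α : V → V be a map with α(0) = 0 that induces an order-preserving bijection of the set of finite-dimensional affine subspaces of V onto itself (ordered by inclusion, with α mapping each affine subspace S to the affine subspace α(S), and S ⊆ S' ⟺ α(S) ⊆ α(S')). Then α is a bijective linear map. -/
/-- A nonempty finite-dimensional affine subspace of `V`, viewed as a set. -/
def IsFDAffine {V : Type*} [AddCommGroup V] [Module ℝ V] (s : Set V) : Prop :=
  s.Nonempty ∧ ∃ A : AffineSubspace ℝ V, (A : Set V) = s ∧ FiniteDimensional ℝ A.direction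

namespace Stmt6

variable {V : Type*} [AddCommGroup V] [Module ℝ V]

/-- The affine set through `p` with direction `W`, as a plain set. -/
def aset (p : V) (W : Submodule ℝ V) : Set V := {q | q - p ∈ W}

lemma mem_aset {p q : V} {W : Submodule ℝ V} : q ∈ aset p W ↔ q - p ∈ W := Iff.rfl

lemma mem_aset_zero {q : V} {W : Submodule ℝ V} : q ∈ aset 0 W ↔ q ∈ W := by
  simp [mem_aset]

lemma self_mem_aset (p : V) (W : Submodule ℝ V) : p ∈ aset p W := by
  simp [mem_aset]

lemma add_mem_aset {p w : V} {W : Submodule ℝ V} (hw : w ∈ W) : p + w ∈ aset p W := by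
  simpa [mem_aset] using hw

lemma aset_eq_of_mem {p q : V} {W : Submodule ℝ V} (hq : q ∈ aset p W) :
    aset p W = aset q W := by
  rw [mem_aset] at hq
  ext r
  constructor <;> intro hr <;> rw [mem_aset] at *
  · have := W.sub_mem hr hq
    simpa using this
  · have := W.add_mem hr hq
    simpa [sub_add_sub_cancel] using this

lemma sub_mem_of_mem_aset {p q r : V} {W : Submodule ℝ V} (hq : q ∈ aset p W)
    (hr : r ∈ aset p W) : q - r ∈ W := by
  rw [mem_aset] at hq hr
  simpa [sub_sub_sub_cancel_right] using W.sub_mem hq hr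

lemma aset_subset_iff {p q : V} {W W' : Submodule ℝ V} (hp : p ∈ aset q W') :
    aset p W ⊆ aset q W' ↔ W ≤ W' := by
  constructor
  · intro h w hw
    have h1 : p + w ∈ aset q W' := h (add_mem_aset hw)
    have := sub_mem_of_mem_aset h1 hp
    simpa using this
  · intro h r hr
    rw [mem_aset] at hp hr ⊢
    have := W'.add_mem (h hr) hp
    simpa [sub_add_sub_cancel] using this

/-- `IsFDAffine` in a convenient normal form. -/
def IsFDAffine' (s : Set V) : Prop :=
  ∃ (p : V) (W : Submodule ℝ V), FiniteDimensional ℝ W ∧ s = aset p W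

lemma isFDAffine_iff {s : Set V} : IsFDAffine s ↔ IsFDAffine' s := by
  constructor
  · rintro ⟨hne, A, hA, hfd⟩
    obtain ⟨p, hp⟩ := hne
    rw [← hA] at hp
    refine ⟨p, A.direction, hfd, ?_⟩
    ext q
    rw [← hA, mem_aset]
    constructor
    · intro hq
      simpa using AffineSubspace.vsub_mem_direction hq hp
    · intro hq
      have := AffineSubspace.vadd_mem_of_mem_direction hq hp
      simpa using this
  · rintro ⟨p, W, hfd, rfl⟩
    refine ⟨⟨p, self_mem_aset p W⟩, AffineSubspace.mk' p W, ?_, ?_⟩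
    · ext q
      rw [AffineSubspace.mem_coe, AffineSubspace.mem_mk']
      rfl
    · rw [AffineSubspace.direction_mk']
      exact hfd

lemma isFDAffine'_singleton (v : V) : IsFDAffine' ({v} : Set V) := by
  refine ⟨v, ⊥, inferInstance, ?_⟩
  ext q; simp [mem_aset, sub_eq_zero, eq_comm]

/-- Linear independence of a pair, unfolded. -/
def Ind (x y : V) : Prop := ∀ a b : ℝ, a • x + b • y = 0 → a = 0 ∧ b = 0

lemma Ind.symm {x y : V} (h : Ind x y) : Ind y x := by
  intro a b hab
  have := h b a (by rw [add_comm] at hab; exact hab)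
  exact ⟨this.2, this.1⟩

lemma Ind.left_ne_zero {x y : V} (h : Ind x y) : x ≠ 0 := by
  intro hx
  have := h 1 0 (by simp [hx])
  simpa using this.1

lemma Ind.right_ne_zero {x y : V} (h : Ind x y) : y ≠ 0 := h.symm.left_ne_zero

lemma Ind.not_mem_span {x y : V} (h : Ind x y) : y ∉ Submodule.span ℝ {x} := by
  intro hy
  rw [Submodule.mem_span_singleton] at hy
  obtain ⟨a, ha⟩ := hy
  have := h a (-1) (by rw [ha]; simp)
  simpa using this.2

lemma ind_of_not_mem_span {x y : V} (hx : x ≠ 0) (hy : y ∉ Submodule.span ℝ {x}) :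
    Ind x y := by
  intro a b hab
  by_cases hb : b = 0
  · subst hb
    simp only [smul_zero, add_zero, zero_smul] at hab
    rcases smul_eq_zero.mp hab with h | h
    · exact ⟨h, rfl⟩
    · exact absurd h hx
  · exfalso
    apply hy
    rw [Submodule.mem_span_singleton]
    refine ⟨-a / b, ?_⟩
    have hby : b • y = -(a • x) := by
      rw [eq_neg_iff_add_eq_zero, add_comm]; exact hab
    have : (b⁻¹ : ℝ) • (b • y) = b⁻¹ • (-(a • x)) := by rw [hby]
    rw [inv_smul_smul₀ hb] at this
    rw [this]
    rw [smul_neg, smul_smul, div_eq_mul_inv, neg_mul, mul_comm, neg_smul]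

lemma Ind.linearIndependent {x y : V} (h : Ind x y) : LinearIndependent ℝ ![x, y] :=
  LinearIndependent.pair_iff.mpr fun s t hst => h s t hst

lemma Ind.finrank_span_pair {x y : V} (h : Ind x y) :
    Module.finrank ℝ (Submodule.span ℝ {x, y}) = 2 := by
  have h1 := finrank_span_eq_card h.linearIndependent
  have h2 : Set.range ![x, y] = {x, y} := by
    simp [Matrix.range_cons, Matrix.range_empty, Set.pair_comm]
  rw [h2] at h1
  simpa using h1

/-- In a space of rank ≥ 2 every nonzero vector has an independent companion. -/
lemma exists_ind (hdim : 2 ≤ Module.rank ℝ V) {x : V} (hx : x ≠ 0) :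
    ∃ z, Ind x z := by
  by_contra hz
  push_neg at hz
  have : ∀ z : V, z ∈ Submodule.span ℝ {x} := by
    intro z
    by_contra hzz
    exact hz z (ind_of_not_mem_span hx hzz)
  have h1 : Module.rank ℝ V ≤ 1 := by
    rw [rank_le_one_iff]
    refine ⟨x, fun v => ?_⟩
    have := this v
    rwa [Submodule.mem_span_singleton] at this
  have := hdim.trans h1
  norm_num at this

lemma smul_cancel {v : V} (hv : v ≠ 0) {a b : ℝ} (h : a • v = b • v) : a = b := by
  have h2 : (a - b) • v = 0 := by rw [sub_smul, h, sub_self]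
  rcases smul_eq_zero.mp h2 with h3 | h3
  · linarith
  · exact absurd h3 hv

lemma Ind.smul_smul {x y : V} (h : Ind x y) {s t : ℝ} (hs : s ≠ 0) (ht : t ≠ 0) :
    Ind (s • x) (t • y) := by
  intro a b hab
  have : (a * s) • x + (b * t) • y = 0 := by
    rw [mul_smul, mul_smul]; exact hab
  obtain ⟨h1, h2⟩ := h _ _ this
  constructor
  · rcases mul_eq_zero.mp h1 with h' | h'
    · exact h'
    · exact absurd h' hs
  · rcases mul_eq_zero.mp h2 with h' | h'
    · exact h'
    · exact absurd h' ht

lemma Ind.add_ne_zero {x y : V} (h : Ind x y) : x + y ≠ 0 := by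
  intro hxy
  have := h 1 1 (by rw [one_smul, one_smul]; exact hxy)
  simpa using this.1

/-- Sets with at least two elements. -/
def Has2 (s : Set V) : Prop := ∃ a b : V, a ≠ b ∧ a ∈ s ∧ b ∈ s

/-- Order-theoretic characterisation of affine lines. -/
def IsLine (s : Set V) : Prop :=
  IsFDAffine' s ∧ Has2 s ∧ ∀ u, IsFDAffine' u → u ⊆ s → Has2 u → u = s

instance spanSingletonFD (d : V) : FiniteDimensional ℝ (Submodule.span ℝ ({d} : Set V)) :=
  FiniteDimensional.span_of_finite ℝ (Set.finite_singleton d)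

instance spanPairFD (x y : V) : FiniteDimensional ℝ (Submodule.span ℝ ({x, y} : Set V)) :=
  FiniteDimensional.span_of_finite ℝ (by simp [Set.finite_singleton])

lemma has2_lineSet {p d : V} (hd : d ≠ 0) : Has2 (aset p (Submodule.span ℝ {d})) := by
  refine ⟨p, p + d, by simpa using hd, self_mem_aset _ _, add_mem_aset ?_⟩
  exact Submodule.mem_span_singleton_self d

lemma isLine_iff {s : Set V} :
    IsLine s ↔ ∃ p d : V, d ≠ 0 ∧ s = aset p (Submodule.span ℝ {d}) := by
  constructor
  · rintro ⟨⟨p, W, hW, rfl⟩, ⟨a, b, hab, ha, hb⟩, hmax⟩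
    have hd0 : b - a ≠ 0 := sub_ne_zero.mpr (Ne.symm hab)
    set d := b - a with hd
    have hdW : d ∈ W := sub_mem_of_mem_aset hb ha
    have hsub : aset a (Submodule.span ℝ {d}) ⊆ aset p W := by
      rw [aset_subset_iff ha, Submodule.span_le]
      simpa using hdW
    have h2 : Has2 (aset a (Submodule.span ℝ {d})) := has2_lineSet hd0
    have := hmax _ ⟨a, _, inferInstance, rfl⟩ hsub h2
    exact ⟨a, d, hd0, this.symm⟩
  · rintro ⟨p, d, hd, rfl⟩
    refine ⟨⟨p, _, inferInstance, rfl⟩, has2_lineSet hd, ?_⟩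
    rintro u ⟨q, W, hW, rfl⟩ hsub ⟨a, b, hab, ha, hb⟩
    have hu : aset q W = aset a W := aset_eq_of_mem ha
    rw [hu] at hsub ⊢
    have hb' : b ∈ aset a W := hu ▸ hb
    have hdW : b - a ∈ W := sub_mem_of_mem_aset hb' (self_mem_aset _ _)
    have hba : b - a ∈ Submodule.span ℝ ({d} : Set V) :=
      sub_mem_of_mem_aset (hsub hb') (hsub (self_mem_aset _ _))
    obtain ⟨c, hc⟩ := Submodule.mem_span_singleton.mp hba
    have hc0 : c ≠ 0 := by
      rintro rfl; rw [zero_smul] at hc; exact sub_ne_zero.mpr (Ne.symm hab) hc.symm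
    have hdWmem : d ∈ W := by
      have : (c⁻¹ : ℝ) • (b - a) ∈ W := W.smul_mem _ hdW
      rwa [← hc, inv_smul_smul₀ hc0] at this
    have hrebase : aset p (Submodule.span ℝ {d}) = aset a (Submodule.span ℝ {d}) :=
      aset_eq_of_mem (hsub (self_mem_aset _ _))
    have hsub2 : aset p (Submodule.span ℝ {d}) ⊆ aset a W := by
      rw [hrebase, aset_subset_iff (self_mem_aset _ _), Submodule.span_le]
      simpa using hdWmem
    exact Set.Subset.antisymm hsub hsub2

/-- Containing a line strictly. -/
def HasStrictLine (s : Set V) : Prop := ∃ L, IsLine L ∧ L ⊆ s ∧ L ≠ s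

/-- Order-theoretic characterisation of affine planes. -/
def IsPlane (s : Set V) : Prop :=
  IsFDAffine' s ∧ HasStrictLine s ∧ ∀ u, IsFDAffine' u → u ⊆ s → HasStrictLine u → u = s

lemma hasStrictLine_of {q a d e : V} {W : Submodule ℝ V} (ha : a ∈ aset q W)
    (hd : d ∈ W) (he : e ∈ W) (hde : Ind d e) : HasStrictLine (aset q W) := by
  have hrebase : aset q W = aset a W := aset_eq_of_mem ha
  refine ⟨aset a (Submodule.span ℝ {d}), isLine_iff.mpr ⟨a, d, hde.left_ne_zero, rfl⟩, ?_, ?_⟩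
  · rw [hrebase, aset_subset_iff (self_mem_aset _ _), Submodule.span_le]
    simpa using hd
  · intro heq
    have : a + e ∈ aset a (Submodule.span ℝ {d}) := by
      rw [heq, hrebase]; exact add_mem_aset he
    rw [mem_aset] at this
    simp only [add_sub_cancel_left] at this
    exact hde.not_mem_span this

lemma exists_ind_of_hasStrictLine {q : V} {W : Submodule ℝ V}
    (h : HasStrictLine (aset q W)) :
    ∃ a d e : V, a ∈ aset q W ∧ d ∈ W ∧ e ∈ W ∧ Ind d e := by
  obtain ⟨L, hL, hsub, hne⟩ := h
  obtain ⟨p, d, hd, rfl⟩ := isLine_iff.mp hL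
  have ha : p ∈ aset q W := hsub (self_mem_aset _ _)
  have hdmem : p + d ∈ aset p (Submodule.span ℝ {d}) :=
    add_mem_aset (Submodule.mem_span_singleton_self d)
  have hdW : d ∈ W := by
    have := sub_mem_of_mem_aset (hsub hdmem) ha
    simpa using this
  obtain ⟨e', he', he'L⟩ := Set.exists_of_ssubset (ssubset_of_subset_of_ne hsub hne)
  refine ⟨p, d, e' - p, ha, hdW, sub_mem_of_mem_aset he' ha, ?_⟩
  refine ind_of_not_mem_span hd fun hmem => he'L ?_
  rwa [mem_aset]

lemma isPlane_iff {s : Set V} :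
    IsPlane s ↔ ∃ p x y : V, Ind x y ∧ s = aset p (Submodule.span ℝ {x, y}) := by
  constructor
  · rintro ⟨⟨p, W, hW, rfl⟩, hsl, hmax⟩
    obtain ⟨a, d, e, ha, hd, he, hde⟩ := exists_ind_of_hasStrictLine hsl
    have hrebase : aset p W = aset a W := aset_eq_of_mem ha
    have hsub : aset a (Submodule.span ℝ {d, e}) ⊆ aset p W := by
      rw [hrebase, aset_subset_iff (self_mem_aset _ _), Submodule.span_le]
      rintro z (rfl | rfl)
      exacts [hd, he]
    have hsl2 : HasStrictLine (aset a (Submodule.span ℝ {d, e})) :=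
      hasStrictLine_of (self_mem_aset _ _)
        (Submodule.subset_span (by simp)) (Submodule.subset_span (by simp)) hde
    have := hmax _ ⟨a, _, inferInstance, rfl⟩ hsub hsl2
    exact ⟨a, d, e, hde, this.symm⟩
  · rintro ⟨p, x, y, hxy, rfl⟩
    refine ⟨⟨p, _, inferInstance, rfl⟩, ?_, ?_⟩
    · exact hasStrictLine_of (self_mem_aset _ _)
        (Submodule.subset_span (by simp)) (Submodule.subset_span (by simp)) hxy
    · rintro u ⟨q, W', hW', rfl⟩ hsub hsl
      obtain ⟨a, d, e, ha, hd, he, hde⟩ := exists_ind_of_hasStrictLine hsl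
      have hq : q ∈ aset p (Submodule.span ℝ {x, y}) := hsub (self_mem_aset _ _)
      have hle : W' ≤ Submodule.span ℝ {x, y} := (aset_subset_iff hq).mp hsub
      have hle2 : Submodule.span ℝ ({d, e} : Set V) ≤ W' := by
        rw [Submodule.span_le]
        rintro z (rfl | rfl)
        exacts [hd, he]
      have h2le : 2 ≤ Module.finrank ℝ W' := by
        calc 2 = Module.finrank ℝ (Submodule.span ℝ ({d, e} : Set V)) :=
              hde.finrank_span_pair.symm
          _ ≤ Module.finrank ℝ W' := Submodule.finrank_mono hle2
      have hW'eq : W' = Submodule.span ℝ ({x, y} : Set V) := by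
        apply Submodule.eq_of_le_of_finrank_le hle
        rw [hxy.finrank_span_pair]
        exact h2le
      rw [hW'eq]
      exact (aset_eq_of_mem hq).symm

section Transfer

variable {α : V → V} (hinj : Function.Injective α)
  (hmap : ∀ s : Set V, IsFDAffine' s → IsFDAffine' (α '' s))
  (hsurj : ∀ t : Set V, IsFDAffine' t → ∃ s, IsFDAffine' s ∧ α '' s = t)

include hinj

omit [AddCommGroup V] [Module ℝ V] in
lemma has2_image_iff {s : Set V} : Has2 (α '' s) ↔ Has2 s := by
  constructor
  · rintro ⟨a, b, hab, ⟨a₀, ha₀, rfl⟩, ⟨b₀, hb₀, rfl⟩⟩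
    exact ⟨a₀, b₀, fun h => hab (by rw [h]), ha₀, hb₀⟩
  · rintro ⟨a, b, hab, ha, hb⟩
    exact ⟨α a, α b, fun h => hab (hinj h), ⟨a, ha, rfl⟩, ⟨b, hb, rfl⟩⟩

include hmap hsurj

lemma isLine_image {s : Set V} (hs : IsLine s) : IsLine (α '' s) := by
  obtain ⟨hfd, h2, hmax⟩ := hs
  refine ⟨hmap s hfd, (has2_image_iff hinj).mpr h2, ?_⟩
  intro u hu husub hu2
  obtain ⟨s₀, hs₀, rfl⟩ := hsurj u hu
  have hsub : s₀ ⊆ s := (Set.image_subset_image_iff hinj).mp husub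
  rw [hmax s₀ hs₀ hsub ((has2_image_iff hinj).mp hu2)]

omit hsurj in
lemma isLine_of_image {s : Set V} (hs : IsFDAffine' s) (h : IsLine (α '' s)) : IsLine s := by
  obtain ⟨hfd, h2, hmax⟩ := h
  refine ⟨hs, (has2_image_iff hinj).mp h2, ?_⟩
  intro u hu husub hu2
  have := hmax (α '' u) (hmap u hu) (Set.image_mono husub)
    ((has2_image_iff hinj).mpr hu2)
  exact (Set.image_injective.mpr hinj) this

lemma hasStrictLine_image_iff {s : Set V} (hs : IsFDAffine' s) :
    HasStrictLine (α '' s) ↔ HasStrictLine s := by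
  constructor
  · rintro ⟨L, hL, hsub, hne⟩
    obtain ⟨L₀, hL₀fd, rfl⟩ := hsurj L hL.1
    refine ⟨L₀, isLine_of_image hinj hmap hL₀fd hL,
      (Set.image_subset_image_iff hinj).mp hsub, ?_⟩
    rintro rfl; exact hne rfl
  · rintro ⟨L, hL, hsub, hne⟩
    exact ⟨α '' L, isLine_image hinj hmap hsurj hL, Set.image_mono hsub,
      fun h => hne ((Set.image_injective.mpr hinj) h)⟩

lemma isPlane_image {s : Set V} (hs : IsPlane s) : IsPlane (α '' s) := by
  obtain ⟨hfd, hsl, hmax⟩ := hs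
  refine ⟨hmap s hfd, (hasStrictLine_image_iff hinj hmap hsurj hfd).mpr hsl, ?_⟩
  intro u hu husub husl
  obtain ⟨s₀, hs₀, rfl⟩ := hsurj u hu
  rw [hmax s₀ hs₀ ((Set.image_subset_image_iff hinj).mp husub)
    ((hasStrictLine_image_iff hinj hmap hsurj hs₀).mp husl)]

end Transfer

lemma span_singleton_eq_of_mem {d v : V} (hv : v ∈ Submodule.span ℝ ({d} : Set V))
    (h0 : v ≠ 0) : Submodule.span ℝ ({v} : Set V) = Submodule.span ℝ ({d} : Set V) := by
  obtain ⟨c, hc⟩ := Submodule.mem_span_singleton.mp hv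
  have hc0 : c ≠ 0 := by rintro rfl; rw [zero_smul] at hc; exact h0 hc.symm
  apply le_antisymm
  · rw [Submodule.span_le]; simpa using hv
  · rw [Submodule.span_le]
    intro z hz
    rcases hz with rfl
    rw [SetLike.mem_coe, Submodule.mem_span_singleton]
    exact ⟨c⁻¹, by rw [← hc, inv_smul_smul₀ hc0]⟩

section Geometry

variable {α : V → V} (hinj : Function.Injective α) (hα0 : α 0 = 0)
  (hmap : ∀ s : Set V, IsFDAffine' s → IsFDAffine' (α '' s))
  (hsurj : ∀ t : Set V, IsFDAffine' t → ∃ s, IsFDAffine' s ∧ α '' s = t)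

include hinj hα0 hmap hsurj

omit hmap hsurj in
lemma ne_zero_image {x : V} (hx : x ≠ 0) : α x ≠ 0 := by
  intro h; exact hx (hinj (h.trans hα0.symm))

lemma image_line_zero {x : V} (hx : x ≠ 0) :
    α '' aset 0 (Submodule.span ℝ {x}) = aset 0 (Submodule.span ℝ {α x}) := by
  have hline : IsLine (aset 0 (Submodule.span ℝ {x})) := isLine_iff.mpr ⟨0, x, hx, rfl⟩
  obtain ⟨p, d, hd, heq⟩ := isLine_iff.mp (isLine_image hinj hmap hsurj hline)
  have h0mem : (0 : V) ∈ α '' aset 0 (Submodule.span ℝ {x}) :=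
    ⟨0, self_mem_aset _ _, hα0⟩
  have hxmem : α x ∈ α '' aset 0 (Submodule.span ℝ {x}) :=
    ⟨x, mem_aset_zero.mpr (Submodule.mem_span_singleton_self x), rfl⟩
  rw [heq] at h0mem hxmem ⊢
  rw [aset_eq_of_mem h0mem] at hxmem ⊢
  have hαx : α x ∈ Submodule.span ℝ ({d} : Set V) := mem_aset_zero.mp hxmem
  rw [← span_singleton_eq_of_mem hαx (ne_zero_image hinj hα0 hx)]

lemma mem_span_image {x y : V} (hx : x ≠ 0) (hy : α y ∈ Submodule.span ℝ ({α x} : Set V)) :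
    y ∈ Submodule.span ℝ ({x} : Set V) := by
  have : α y ∈ α '' aset 0 (Submodule.span ℝ {x}) := by
    rw [image_line_zero hinj hα0 hmap hsurj hx]
    exact mem_aset_zero.mpr hy
  obtain ⟨w, hw, hww⟩ := this
  rw [← hinj hww]
  exact mem_aset_zero.mp hw

lemma ind_image {x y : V} (h : Ind x y) : Ind (α x) (α y) := by
  refine ind_of_not_mem_span (ne_zero_image hinj hα0 h.left_ne_zero) ?_
  intro hmem
  exact h.not_mem_span (mem_span_image hinj hα0 hmap hsurj h.left_ne_zero hmem)

lemma image_parallel {x y : V} (h : Ind x y) :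
    α '' aset x (Submodule.span ℝ {y}) = aset (α x) (Submodule.span ℝ {α y}) := by
  have hx : x ≠ 0 := h.left_ne_zero
  have hy : y ≠ 0 := h.right_ne_zero
  have hαy : α y ≠ 0 := ne_zero_image hinj hα0 hy
  set P : Set V := aset 0 (Submodule.span ℝ {x, y}) with hP
  have hplane : IsPlane P := isPlane_iff.mpr ⟨0, x, y, h, rfl⟩
  obtain ⟨q, w₁, w₂, hw, heqP⟩ := isPlane_iff.mp (isPlane_image hinj hmap hsurj hplane)
  have h0P : (0 : V) ∈ α '' P := ⟨0, self_mem_aset _ _, hα0⟩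
  rw [heqP] at h0P
  have heqP0 : α '' P = aset 0 (Submodule.span ℝ {w₁, w₂}) := by
    rw [heqP, aset_eq_of_mem h0P]
  set W₂ := Submodule.span ℝ ({w₁, w₂} : Set V) with hW₂
  set M : Set V := aset x (Submodule.span ℝ {y}) with hM
  have hMP : M ⊆ P := by
    rw [hM, hP, aset_subset_iff (mem_aset_zero.mpr (Submodule.subset_span (by simp)))]
    rw [Submodule.span_le]
    intro z hz; rcases hz with rfl
    exact Submodule.subset_span (by simp)
  have hdisj : M ∩ aset 0 (Submodule.span ℝ {y}) = ∅ := by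
    ext r
    simp only [Set.mem_inter_iff, Set.mem_empty_iff_false, iff_false, not_and]
    intro hr1 hr2
    have h1 : r - x ∈ Submodule.span ℝ ({y} : Set V) := mem_aset.mp hr1
    have h2 : r ∈ Submodule.span ℝ ({y} : Set V) := mem_aset_zero.mp hr2
    have : x ∈ Submodule.span ℝ ({y} : Set V) := by
      have := Submodule.sub_mem _ h2 h1
      simpa using this
    exact h.symm.not_mem_span this
  have hMline : IsLine M := isLine_iff.mpr ⟨x, y, hy, rfl⟩
  obtain ⟨a, d, hd, heqM⟩ := isLine_iff.mp (isLine_image hinj hmap hsurj hMline)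
  have haM : a ∈ α '' M := heqM ▸ self_mem_aset a _
  have hsubW : α '' M ⊆ aset 0 W₂ := by
    rw [← heqP0]; exact Set.image_mono hMP
  have haW : a ∈ W₂ := mem_aset_zero.mp (hsubW haM)
  have hdW : d ∈ W₂ := by
    have h1 : a + d ∈ α '' M := heqM ▸ add_mem_aset (Submodule.mem_span_singleton_self d)
    have := Submodule.sub_mem _ (mem_aset_zero.mp (hsubW h1)) haW
    simpa using this
  have hαyW : α y ∈ W₂ := by
    have h1 : α y ∈ α '' P := ⟨y, mem_aset_zero.mpr (Submodule.subset_span (by simp)), rfl⟩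
    rw [heqP0] at h1
    exact mem_aset_zero.mp h1
  have hdisj2 : α '' M ∩ aset 0 (Submodule.span ℝ {α y}) = ∅ := by
    rw [← image_line_zero hinj hα0 hmap hsurj hy, ← Set.image_inter hinj, hdisj,
      Set.image_empty]
  have hdspan : d ∈ Submodule.span ℝ ({α y} : Set V) := by
    by_contra hds
    have hind : Ind (α y) d := ind_of_not_mem_span hαy hds
    have hle : Submodule.span ℝ ({α y, d} : Set V) ≤ W₂ := by
      rw [Submodule.span_le]; rintro z (rfl | rfl); exacts [hαyW, hdW]
    have hspan_eq : Submodule.span ℝ ({α y, d} : Set V) = W₂ := by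
      apply Submodule.eq_of_le_of_finrank_le hle
      rw [hind.finrank_span_pair, hw.finrank_span_pair]
    obtain ⟨u, v, huv⟩ := Submodule.mem_span_pair.mp (hspan_eq ▸ haW)
    have hpt1 : a + (-v) • d ∈ α '' M := by
      rw [heqM]
      exact add_mem_aset (Submodule.smul_mem _ _ (Submodule.mem_span_singleton_self d))
    have hpt2 : a + (-v) • d ∈ aset 0 (Submodule.span ℝ {α y}) := by
      rw [mem_aset_zero]
      have : a + (-v) • d = u • α y := by
        rw [← huv]; module
      rw [this]
      exact Submodule.smul_mem _ _ (Submodule.mem_span_singleton_self _)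
    have : a + (-v) • d ∈ (∅ : Set V) := hdisj2 ▸ ⟨hpt1, hpt2⟩
    exact this
  have hαxM : α x ∈ α '' M := ⟨x, self_mem_aset _ _, rfl⟩
  rw [heqM] at hαxM ⊢
  rw [aset_eq_of_mem hαxM, span_singleton_eq_of_mem hdspan hd]

lemma add_image_ind {x y : V} (h : Ind x y) : α (x + y) = α x + α y := by
  have hax : Ind (α x) (α y) := ind_image hinj hα0 hmap hsurj h
  have h1 : α (x + y) ∈ aset (α x) (Submodule.span ℝ {α y}) := by
    rw [← image_parallel hinj hα0 hmap hsurj h]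
    exact ⟨x + y, add_mem_aset (Submodule.mem_span_singleton_self y), rfl⟩
  have h2 : α (x + y) ∈ aset (α y) (Submodule.span ℝ {α x}) := by
    rw [← image_parallel hinj hα0 hmap hsurj h.symm]
    exact ⟨x + y, by rw [mem_aset]; simpa using Submodule.mem_span_singleton_self x, rfl⟩
  obtain ⟨t, ht⟩ := Submodule.mem_span_singleton.mp (mem_aset.mp h1)
  obtain ⟨s, hs⟩ := Submodule.mem_span_singleton.mp (mem_aset.mp h2)
  have key : (1 - s) • α x + (t - 1) • α y = 0 := by
    linear_combination (norm := module) ht - hs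
  obtain ⟨hs1, ht1⟩ := hax (1 - s) (t - 1) key
  have ht' : t = 1 := by linarith
  rw [ht', one_smul, eq_sub_iff_add_eq] at ht
  rw [← ht]; abel

lemma exists_coeff {x : V} (hx : x ≠ 0) (t : ℝ) : ∃ c : ℝ, α (t • x) = c • α x := by
  have h1 : α (t • x) ∈ α '' aset 0 (Submodule.span ℝ {x}) :=
    ⟨t • x, mem_aset_zero.mpr (Submodule.smul_mem _ _ (Submodule.mem_span_singleton_self x)), rfl⟩
  rw [image_line_zero hinj hα0 hmap hsurj hx] at h1
  obtain ⟨c, hc⟩ := Submodule.mem_span_singleton.mp (mem_aset_zero.mp h1)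
  exact ⟨c, hc.symm⟩

lemma sigma_step {z y : V} (hzy : Ind z y) (c : ℝ → ℝ)
    (hz : ∀ t, α (t • z) = c t • α z) : ∀ t, α (t • y) = c t • α y := by
  have hαz : α z ≠ 0 := ne_zero_image hinj hα0 hzy.left_ne_zero
  have hαy : α y ≠ 0 := ne_zero_image hinj hα0 hzy.right_ne_zero
  have hc0 : c 0 = 0 := by
    have := hz 0
    rw [zero_smul, hα0] at this
    rcases smul_eq_zero.mp this.symm with h' | h'
    · exact h'
    · exact absurd h' hαz
  intro t
  by_cases ht : t = 0
  · subst ht; rw [zero_smul, hα0, hc0, zero_smul]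
  obtain ⟨d, hd⟩ := exists_coeff hinj hα0 hmap hsurj hzy.right_ne_zero t
  have hindzy : Ind (α z) (α y) := ind_image hinj hα0 hmap hsurj hzy
  have hzyne : z + y ≠ 0 := hzy.add_ne_zero
  obtain ⟨e, he⟩ := exists_coeff hinj hα0 hmap hsurj hzyne t
  have hsum : α (t • z + t • y) = c t • α z + d • α y := by
    rw [add_image_ind hinj hα0 hmap hsurj (hzy.smul_smul ht ht), hz t, hd]
  have hsum2 : α (t • z + t • y) = e • α z + e • α y := by
    rw [show t • z + t • y = t • (z + y) by rw [smul_add],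
      he, add_image_ind hinj hα0 hmap hsurj hzy, smul_add]
  have hkey : (c t - e) • α z + (d - e) • α y = 0 := by
    have := hsum.symm.trans hsum2
    linear_combination (norm := module) this
  obtain ⟨h1, h2⟩ := hindzy _ _ hkey
  rw [hd]
  have : d = c t := by linarith
  rw [this]

lemma sigma_univ (hdim : 2 ≤ Module.rank ℝ V) {x₀ : V} (hx₀ : x₀ ≠ 0) (c : ℝ → ℝ)
    (hbase : ∀ t, α (t • x₀) = c t • α x₀) :
    ∀ (x : V), x ≠ 0 → ∀ t, α (t • x) = c t • α x := by
  intro x hx t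
  by_cases hind : Ind x₀ x
  · exact sigma_step hinj hα0 hmap hsurj hind c hbase t
  · have hxspan : x ∈ Submodule.span ℝ ({x₀} : Set V) := by
      by_contra hxs
      exact hind (ind_of_not_mem_span hx₀ hxs)
    obtain ⟨z, hz⟩ := exists_ind hdim hx₀
    have hstep1 := sigma_step hinj hα0 hmap hsurj hz c hbase
    have hzx : Ind z x := by
      refine ind_of_not_mem_span hz.right_ne_zero ?_
      intro hxz
      obtain ⟨a, ha⟩ := Submodule.mem_span_singleton.mp hxz
      have ha0 : a ≠ 0 := by rintro rfl; rw [zero_smul] at ha; exact hx ha.symm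
      apply hz.not_mem_span
      have : z = a⁻¹ • x := by rw [← ha, inv_smul_smul₀ ha0]
      rw [this]
      exact Submodule.smul_mem _ _ hxspan
    exact sigma_step hinj hα0 hmap hsurj hzx c hstep1 t

end Geometry

end Stmt6

/-- If `α : V → V` fixes `0` and induces an order preserving bijection of
the set of finite dimensional affine subspaces of `V` (with `dim V ≥ 2`), then `α`
is a bijective linear map. -/
theorem stmt_6 {V : Type*} [AddCommGroup V] [Module ℝ V]
    (hdim : 2 ≤ Module.rank ℝ V)
    (α : V → V) (h0 : α 0 = 0)
    (hmap : ∀ s : Set V, IsFDAffine s → IsFDAffine (α '' s))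
    (hsurj : ∀ t : Set V, IsFDAffine t → ∃ s : Set V, IsFDAffine s ∧ α '' s = t)
    (hord : ∀ s s' : Set V, IsFDAffine s → IsFDAffine s' → (s ⊆ s' ↔ α '' s ⊆ α '' s')) :
    IsLinearMap ℝ α ∧ Function.Bijective α := by
  classical
  open Stmt6 in
  -- translate the hypotheses to the normal form
  have hmap' : ∀ s : Set V, IsFDAffine' s → IsFDAffine' (α '' s) := fun s hs =>
    isFDAffine_iff.mp (hmap s (isFDAffine_iff.mpr hs))
  have hsurj' : ∀ t : Set V, IsFDAffine' t → ∃ s, IsFDAffine' s ∧ α '' s = t := by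
    intro t ht
    obtain ⟨s, hs, hst⟩ := hsurj t (isFDAffine_iff.mpr ht)
    exact ⟨s, isFDAffine_iff.mp hs, hst⟩
  -- injectivity
  have hinj : Function.Injective α := by
    intro a b hab
    have hfa : IsFDAffine ({a} : Set V) := isFDAffine_iff.mpr (isFDAffine'_singleton a)
    have hfb : IsFDAffine ({b} : Set V) := isFDAffine_iff.mpr (isFDAffine'_singleton b)
    have := (hord {a} {b} hfa hfb).mpr
    simp only [Set.image_singleton, hab, Set.singleton_subset_iff, Set.mem_singleton_iff] at this
    exact this trivial
  -- surjectivity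
  have hsurjV : Function.Surjective α := by
    intro w
    obtain ⟨s, hs, hst⟩ := hsurj {w} (isFDAffine_iff.mpr (isFDAffine'_singleton w))
    obtain ⟨hne, -⟩ := hs
    obtain ⟨v, hv⟩ := hne
    refine ⟨v, ?_⟩
    have : α v ∈ α '' s := ⟨v, hv, rfl⟩
    rw [hst] at this
    exact this
  -- a nonzero base vector
  have hnt : Nontrivial V := by
    by_contra h
    rw [not_nontrivial_iff_subsingleton] at h
    have h1 : Module.rank ℝ V = 0 := rank_subsingleton' ℝ V
    rw [h1] at hdim
    norm_num at hdim
  obtain ⟨x₀, hx₀⟩ := exists_ne (0 : V)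
  -- the scalar map σ
  choose σ hσ using exists_coeff hinj h0 hmap' hsurj' hx₀
  have huniv := sigma_univ hinj h0 hmap' hsurj' hdim hx₀ σ hσ
  have hαx₀ : α x₀ ≠ 0 := ne_zero_image hinj h0 hx₀
  have hσ0 : σ 0 = 0 := by
    have := hσ 0
    rw [zero_smul, h0] at this
    rcases smul_eq_zero.mp this.symm with h' | h'
    · exact h'
    · exact absurd h' hαx₀
  have hσ1 : σ 1 = 1 := by
    have := hσ 1
    rw [one_smul] at this
    exact (smul_cancel hαx₀ (by rw [← this, one_smul])).symm
  -- σ is additive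
  obtain ⟨z, hz⟩ := exists_ind hdim hx₀
  have hA : ∀ s : ℝ, α (s • x₀ + z) = σ s • α x₀ + α z := by
    intro s
    by_cases hs : s = 0
    · subst hs; rw [zero_smul, zero_add, hσ0, zero_smul, zero_add]
    · have hind : Ind (s • x₀) z := by
        have := hz.smul_smul hs one_ne_zero
        rwa [one_smul] at this
      rw [add_image_ind hinj h0 hmap' hsurj' hind, hσ s]
  have hσadd : ∀ s t : ℝ, σ (s + t) = σ s + σ t := by
    intro s t
    by_cases ht : t = 0
    · subst ht; rw [add_zero, hσ0, add_zero]
    have hInd2 : Ind (s • x₀ + z) (t • x₀) := by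
      intro a b hab
      have h1 : (a * s + b * t) • x₀ + a • z = 0 := by
        rw [add_smul, mul_smul, mul_smul]
        linear_combination (norm := module) hab
      obtain ⟨h2, h3⟩ := hz _ _ h1
      subst h3
      simp only [zero_mul, zero_add] at h2
      rcases mul_eq_zero.mp h2 with h' | h'
      · exact ⟨rfl, h'⟩
      · exact absurd h' ht
    have heq1 : α ((s + t) • x₀ + z) = σ (s + t) • α x₀ + α z := hA (s + t)
    have heq2 : α ((s + t) • x₀ + z) = (σ s + σ t) • α x₀ + α z := by
      have hrw : (s + t) • x₀ + z = (s • x₀ + z) + t • x₀ := by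
        rw [add_smul]; abel
      rw [hrw, add_image_ind hinj h0 hmap' hsurj' hInd2, hA s, hσ t, add_smul]
      abel
    have := heq1.symm.trans heq2
    have h4 : σ (s + t) • α x₀ = (σ s + σ t) • α x₀ := by
      have := add_right_cancel this
      exact this
    exact smul_cancel hαx₀ h4
  -- σ is multiplicative
  have hσmul : ∀ s t : ℝ, σ (s * t) = σ s * σ t := by
    intro s t
    by_cases ht : t = 0
    · subst ht; rw [mul_zero, hσ0, mul_zero]
    have htx₀ : t • x₀ ≠ 0 := by
      intro h'
      rcases smul_eq_zero.mp h' with h'' | h''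
      · exact ht h''
      · exact hx₀ h''
    have h1 : α ((s * t) • x₀) = σ (s * t) • α x₀ := hσ (s * t)
    have h2 : α ((s * t) • x₀) = (σ s * σ t) • α x₀ := by
      rw [mul_smul]
      rw [huniv (t • x₀) htx₀ s, hσ t, smul_smul]
    exact smul_cancel hαx₀ (h1.symm.trans h2)
  -- σ is the identity
  have hσid : ∀ t : ℝ, σ t = t := by
    let σ' : ℝ →+* ℝ :=
      { toFun := σ
        map_one' := hσ1
        map_mul' := hσmul
        map_zero' := hσ0
        map_add' := hσadd }
    intro t
    have : σ' = RingHom.id ℝ := Subsingleton.elim _ _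
    exact RingHom.congr_fun this t
  -- homogeneity
  have hsmul : ∀ (t : ℝ) (x : V), α (t • x) = t • α x := by
    intro t x
    by_cases hx : x = 0
    · subst hx; rw [smul_zero, h0, smul_zero]
    · rw [huniv x hx t, hσid t]
  -- additivity
  have hadd : ∀ x y : V, α (x + y) = α x + α y := by
    intro x y
    by_cases hx : x = 0
    · subst hx; rw [zero_add, h0, zero_add]
    by_cases hy : y = 0
    · subst hy; rw [add_zero, h0, add_zero]
    by_cases hind : Ind x y
    · exact add_image_ind hinj h0 hmap' hsurj' hind
    · have hyspan : y ∈ Submodule.span ℝ ({x} : Set V) := by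
        by_contra hys
        exact hind (ind_of_not_mem_span hx hys)
      obtain ⟨c, hc⟩ := Submodule.mem_span_singleton.mp hyspan
      have hrw : x + y = (1 + c) • x := by
        rw [add_smul, one_smul, hc]
      rw [hrw, hsmul (1 + c) x, add_smul, one_smul, ← hsmul c x, hc]
  exact ⟨⟨hadd, fun t x => hsmul t x⟩, hinj, hsurjV⟩
end

section
/- Let X be a real Banach space and let T be a fully order preserving bijection of the cone of all lower semicontinuous extended real-valued seminorms on X onto itself (with the pointwise order). Then T maps every everywhere-finite (hence continuous) seminorm to an everywhere-finite seminorm. -/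
open scoped ENNReal

/-- A lower semicontinuous extended real-valued seminorm on `X`. -/
def IsLscSeminorm {X : Type*} [NormedAddCommGroup X] [NormedSpace ℝ X]
    (p : X → ℝ≥0∞) : Prop :=
  LowerSemicontinuous p ∧ (∀ x y : X, p (x + y) ≤ p x + p y) ∧
    ∀ (c : ℝ) (x : X), p (c • x) = ENNReal.ofReal |c| * p x

section Aux
attribute [local instance] Classical.propDecidable

variable {X : Type*} [NormedAddCommGroup X] [NormedSpace ℝ X]

local notation "LS" => {p : X → ℝ≥0∞ // IsLscSeminorm p}

lemma IsLscSeminorm.zero {p : X → ℝ≥0∞} (hp : IsLscSeminorm p) : p 0 = 0 := by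
  have h := hp.2.2 0 0
  simpa using h

lemma enn_mul_sup (a b c : ℝ≥0∞) : a * (b ⊔ c) = a * b ⊔ a * c := by
  rcases le_total b c with h | h
  · rw [sup_eq_right.2 h, sup_eq_right.2 (mul_le_mul_right h a)]
  · rw [sup_eq_left.2 h, sup_eq_left.2 (mul_le_mul_right h a)]

lemma IsLscSeminorm.sup {p q : X → ℝ≥0∞} (hp : IsLscSeminorm p) (hq : IsLscSeminorm q) :
    IsLscSeminorm (fun x => p x ⊔ q x) := by
  refine ⟨?_, ?_, ?_⟩
  · intro x c hc
    rcases lt_sup_iff.1 hc with h | h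
    · exact (hp.1 x c h).mono fun y hy => lt_sup_iff.2 (Or.inl hy)
    · exact (hq.1 x c h).mono fun y hy => lt_sup_iff.2 (Or.inr hy)
  · intro x y
    exact sup_le ((hp.2.1 x y).trans (add_le_add le_sup_left le_sup_left))
      ((hq.2.1 x y).trans (add_le_add le_sup_right le_sup_right))
  · intro c x
    simp only [hp.2.2 c x, hq.2.2 c x, enn_mul_sup]

lemma isLscSeminorm_ind (K : Submodule ℝ X) (hK : IsClosed (K : Set X)) :
    IsLscSeminorm (fun y => if y ∈ K then (0 : ℝ≥0∞) else ⊤) := by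
  refine ⟨?_, ?_, ?_⟩
  · intro x c hc
    dsimp only at hc ⊢
    by_cases hx : x ∈ K
    · simp only [hx, if_pos] at hc
      exact absurd hc (by simp)
    · have hmem : ∀ᶠ y in nhds x, y ∉ K := hK.isOpen_compl.eventually_mem hx
      rw [if_neg hx] at hc
      exact hmem.mono fun y hy => by rw [if_neg hy]; exact hc
  · intro x y
    dsimp only
    by_cases hx : x ∈ K
    · by_cases hy : y ∈ K
      · simp [hx, hy, K.add_mem hx hy]
      · simp [hy]
    · simp [hx]
  · intro c x
    dsimp only
    by_cases hc : c = 0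
    · subst hc
      simp [K.zero_mem]
    · have hiff : c • x ∈ K ↔ x ∈ K := K.smul_mem_iff hc
      by_cases hx : x ∈ K
      · simp [hx, hiff.2 hx]
      · rw [if_neg (fun h => hx (hiff.1 h)), if_neg hx,
          ENNReal.mul_top (by simpa using abs_pos.2 hc : ENNReal.ofReal |c| ≠ 0)]
  
lemma isLscSeminorm_mulAbs (f : X →L[ℝ] ℝ) (m : ℝ) (hm : 0 ≤ m) :
    IsLscSeminorm (fun y => ENNReal.ofReal (m * |f y|)) := by
  refine ⟨Continuous.lowerSemicontinuous ?_, ?_, ?_⟩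
  · exact ENNReal.continuous_ofReal.comp (continuous_const.mul f.continuous.abs)
  · intro x y
    dsimp only
    rw [← ENNReal.ofReal_add (by positivity) (by positivity)]
    apply ENNReal.ofReal_le_ofReal
    have h1 : |f (x + y)| ≤ |f x| + |f y| := by rw [map_add]; exact abs_add_le _ _
    nlinarith
  · intro c x
    dsimp only
    rw [← ENNReal.ofReal_mul (abs_nonneg c)]
    congr 1
    rw [map_smul, smul_eq_mul, abs_mul]
    ring

/-- The slab seminorm: finite on `ℝ x₁`, `⊤` elsewhere. -/
noncomputable def slabFun (f : X →L[ℝ] ℝ) (x₁ : X) (m : ℝ) : X → ℝ≥0∞ :=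
  fun y => (if y ∈ Submodule.span ℝ ({x₁} : Set X) then (0 : ℝ≥0∞) else ⊤) ⊔
    ENNReal.ofReal (m * |f y|)

lemma isLscSeminorm_slabFun (f : X →L[ℝ] ℝ) (x₁ : X) (m : ℝ) (hm : 0 ≤ m) :
    IsLscSeminorm (slabFun f x₁ m) :=
  (isLscSeminorm_ind _ (Submodule.closed_of_finiteDimensional _)).sup
    (isLscSeminorm_mulAbs f m hm)

lemma slabFun_top_off {f : X →L[ℝ] ℝ} {x₁ : X} {m : ℝ} {y : X}
    (hy : y ∉ Submodule.span ℝ ({x₁} : Set X)) : slabFun f x₁ m y = ⊤ := by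
  simp [slabFun, hy]

lemma slabFun_self_ne_top {f : X →L[ℝ] ℝ} {x₁ : X} {m : ℝ} : slabFun f x₁ m x₁ ≠ ⊤ := by
  simp [slabFun, Submodule.mem_span_singleton_self]

lemma slabFun_self {f : X →L[ℝ] ℝ} {x₁ : X} {m : ℝ} (hf : f x₁ = 1) :
    slabFun f x₁ m x₁ = ENNReal.ofReal m := by
  simp [slabFun, Submodule.mem_span_singleton_self, hf]

lemma le_slabFun {p : X → ℝ≥0∞} (hp : IsLscSeminorm p) {f : X →L[ℝ] ℝ} {x₁ : X}
    (hfin : p x₁ ≠ ⊤) (hf : f x₁ = 1) :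
    ∀ y, p y ≤ slabFun f x₁ (p x₁).toReal y := by
  intro y
  by_cases hy : y ∈ Submodule.span ℝ ({x₁} : Set X)
  · obtain ⟨t, rfl⟩ := Submodule.mem_span_singleton.1 hy
    rw [hp.2.2]
    have h2 : slabFun f x₁ (p x₁).toReal (t • x₁)
        = ENNReal.ofReal ((p x₁).toReal * |t|) := by
      simp [slabFun, Submodule.smul_mem _ _ (Submodule.mem_span_singleton_self x₁),
        hf, smul_eq_mul]
    rw [h2, mul_comm ((p x₁).toReal), ENNReal.ofReal_mul (abs_nonneg t),
      ENNReal.ofReal_toReal hfin]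
  · rw [slabFun_top_off hy]
    exact le_top

/-- Upper set of `c` is totally ordered. -/
def UpperChain (c : LS) : Prop :=
  ∀ r r' : LS, (∀ x, c.1 x ≤ r.1 x) → (∀ x, c.1 x ≤ r'.1 x) →
    ((∀ x, r.1 x ≤ r'.1 x) ∨ (∀ x, r'.1 x ≤ r.1 x))

lemma compare_of_top_off_span (x₁ : X) (r r' : LS)
    (hr : ∀ z, z ∉ Submodule.span ℝ ({x₁} : Set X) → r.1 z = ⊤)
    (hr' : ∀ z, z ∉ Submodule.span ℝ ({x₁} : Set X) → r'.1 z = ⊤) :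
    (∀ x, r.1 x ≤ r'.1 x) ∨ (∀ x, r'.1 x ≤ r.1 x) := by
  rcases le_total (r.1 x₁) (r'.1 x₁) with h | h
  · left
    intro z
    by_cases hz : z ∈ Submodule.span ℝ ({x₁} : Set X)
    · obtain ⟨t, rfl⟩ := Submodule.mem_span_singleton.1 hz
      rw [r.2.2.2, r'.2.2.2]
      exact mul_le_mul_right h _
    · rw [hr' z hz]; exact le_top
  · right
    intro z
    by_cases hz : z ∈ Submodule.span ℝ ({x₁} : Set X)
    · obtain ⟨t, rfl⟩ := Submodule.mem_span_singleton.1 hz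
      rw [r.2.2.2, r'.2.2.2]
      exact mul_le_mul_right h _
    · rw [hr z hz]; exact le_top

lemma upperChain_slab (f : X →L[ℝ] ℝ) (x₁ : X) (m : ℝ) (hsem : IsLscSeminorm (slabFun f x₁ m)) :
    UpperChain (⟨slabFun f x₁ m, hsem⟩ : LS) := by
  intro r r' h1 h2
  apply compare_of_top_off_span x₁
  · intro z hz
    exact top_le_iff.1 (by rw [← slabFun_top_off (f := f) (m := m) hz]; exact h1 z)
  · intro z hz
    exact top_le_iff.1 (by rw [← slabFun_top_off (f := f) (m := m) hz]; exact h2 z)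

/-- The top element: `0` at `0`, `⊤` elsewhere. -/
noncomputable def topS : LS :=
  ⟨fun y => if y ∈ (⊥ : Submodule ℝ X) then (0 : ℝ≥0∞) else ⊤,
    isLscSeminorm_ind ⊥ (by rw [Submodule.bot_coe]; exact isClosed_singleton)⟩

lemma slab_ne_topS {f : X →L[ℝ] ℝ} {x₁ : X} {m : ℝ} (hx : x₁ ≠ 0)
    (hsem : IsLscSeminorm (slabFun f x₁ m)) : (⟨slabFun f x₁ m, hsem⟩ : LS) ≠ topS := by
  intro h
  have h2 := congrFun (congrArg Subtype.val h) x₁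
  simp only [topS] at h2
  rw [if_neg (by simpa using hx)] at h2
  exact slabFun_self_ne_top h2

lemma le_topS (u : LS) : ∀ x, u.1 x ≤ (topS : LS).1 x := by
  intro x
  by_cases hx : x ∈ (⊥ : Submodule ℝ X)
  · have : x = 0 := by simpa using hx
    subst this
    simp [topS, u.2.zero]
  · have hx0 : x ≠ 0 := by simpa using hx
    simp [topS, hx0]

lemma exists_ne_zero_fin (d : LS) (h : d ≠ (topS : LS)) : ∃ w : X, w ≠ 0 ∧ d.1 w ≠ ⊤ := by
  by_contra h'
  push_neg at h'
  apply h
  apply Subtype.ext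
  funext y
  by_cases hy : y = 0
  · subst hy
    simp [topS, d.2.zero]
  · rw [h' y hy]
    simp [topS, hy]

lemma exists_dual_one (x : X) (hx : x ≠ 0) : ∃ f : X →L[ℝ] ℝ, f x = 1 := by
  obtain ⟨g, -, hg⟩ := exists_dual_vector ℝ x (norm_ne_zero_iff.2 hx)
  refine ⟨‖x‖⁻¹ • g, ?_⟩
  have : g x = ‖x‖ := by simpa using hg
  simp [this, inv_mul_cancel₀ (norm_ne_zero_iff.2 hx)]

lemma exists_dual_annihilating (u v : X) (hv : v ∉ Submodule.span ℝ ({u} : Set X)) :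
    ∃ f : X →L[ℝ] ℝ, f v ≠ 0 ∧ f u = 0 := by
  obtain ⟨f, s, hs, hv'⟩ := geometric_hahn_banach_closed_point
    (Submodule.span ℝ ({u} : Set X)).convex
    (Submodule.closed_of_finiteDimensional _) hv
  have hs0 : 0 < s := by
    have := hs 0 (Submodule.zero_mem _)
    simpa using this
  have hfu : f u = 0 := by
    by_contra hfu
    have h1 : ∀ t : ℝ, t * f u < s := by
      intro t
      have := hs (t • u) (Submodule.smul_mem _ _ (Submodule.mem_span_singleton_self u))
      simpa [map_smul, smul_eq_mul] using this
    have := h1 ((s + 1) / f u)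
    rw [div_mul_cancel₀ _ hfu] at this
    linarith
  exact ⟨f, by intro h0; rw [h0] at hv'; linarith, hfu⟩

/-- Key classification step: the finiteness domain of an element with totally
ordered upper set lies on a line. -/
lemma domain_subset_of_upperChain (d : LS) (hch : UpperChain d) (x₁ : X)
    (hx1 : x₁ ≠ 0) (hfin : d.1 x₁ ≠ ⊤) :
    ∀ z, d.1 z ≠ ⊤ → z ∈ Submodule.span ℝ ({x₁} : Set X) := by
  intro z hz
  by_contra hzs
  have hx1z : x₁ ∉ Submodule.span ℝ ({z} : Set X) := by
    intro hmem
    obtain ⟨t, ht⟩ := Submodule.mem_span_singleton.1 hmem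
    have ht0 : t ≠ 0 := by
      rintro rfl
      rw [zero_smul] at ht
      exact hx1 ht.symm
    exact hzs (Submodule.mem_span_singleton.2 ⟨t⁻¹, by rw [← ht, smul_smul,
      inv_mul_cancel₀ ht0, one_smul]⟩)
  obtain ⟨f, hfz, hfx⟩ := exists_dual_annihilating x₁ z hzs
  obtain ⟨g, hgx, hgz⟩ := exists_dual_annihilating z x₁ hx1z
  have hkerf : IsClosed ((LinearMap.ker (f : X →ₗ[ℝ] ℝ) : Submodule ℝ X) : Set X) :=
    by exact ContinuousLinearMap.isClosed_ker f
  have hkerg : IsClosed ((LinearMap.ker (g : X →ₗ[ℝ] ℝ) : Submodule ℝ X) : Set X) :=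
    by exact ContinuousLinearMap.isClosed_ker g
  set r : LS := ⟨fun y => d.1 y ⊔ (if y ∈ LinearMap.ker (g : X →ₗ[ℝ] ℝ) then (0 : ℝ≥0∞) else ⊤),
    d.2.sup (isLscSeminorm_ind _ hkerg)⟩
  set r' : LS := ⟨fun y => d.1 y ⊔ (if y ∈ LinearMap.ker (f : X →ₗ[ℝ] ℝ) then (0 : ℝ≥0∞) else ⊤),
    d.2.sup (isLscSeminorm_ind _ hkerf)⟩
  have h1 : ∀ x, d.1 x ≤ r.1 x := fun x => le_sup_left
  have h2 : ∀ x, d.1 x ≤ r'.1 x := fun x => le_sup_left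
  have hrx : r.1 x₁ = ⊤ := by
    have : x₁ ∉ LinearMap.ker (g : X →ₗ[ℝ] ℝ) := by simpa [LinearMap.mem_ker] using hgx
    simp [r, this]
  have hr'x : r'.1 x₁ = d.1 x₁ := by
    have : x₁ ∈ LinearMap.ker (f : X →ₗ[ℝ] ℝ) := by simpa [LinearMap.mem_ker] using hfx
    simp [r', this]
  have hrz : r.1 z = d.1 z := by
    have : z ∈ LinearMap.ker (g : X →ₗ[ℝ] ℝ) := by simpa [LinearMap.mem_ker] using hgz
    simp [r, this]
  have hr'z : r'.1 z = ⊤ := by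
    have : z ∉ LinearMap.ker (f : X →ₗ[ℝ] ℝ) := by simpa [LinearMap.mem_ker] using hfz
    simp [r', this]
  rcases hch r r' h1 h2 with h | h
  · have := h x₁
    rw [hrx, hr'x] at this
    exact hfin (top_le_iff.1 this)
  · have := h z
    rw [hr'z, hrz] at this
    exact hz (top_le_iff.1 this)

end Aux

/-- A fully order preserving bijection of the cone of lsc extended
real-valued seminorms on a Banach space maps everywhere-finite seminorms to
everywhere-finite seminorms. -/
theorem stmt_9 {X : Type*} [NormedAddCommGroup X] [NormedSpace ℝ X] [CompleteSpace X]
    (T : {p : X → ℝ≥0∞ // IsLscSeminorm p} → {p : X → ℝ≥0∞ // IsLscSeminorm p})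
    (hbij : Function.Bijective T)
    (hord : ∀ p q, (∀ x, p.1 x ≤ q.1 x) ↔ (∀ x, (T p).1 x ≤ (T q).1 x)) :
    ∀ p, (∀ x, p.1 x ≠ ⊤) → ∀ x, (T p).1 x ≠ ⊤ := by
  intro p hp x₀
  by_cases hx₀ : x₀ = 0
  · subst hx₀
    rw [(T p).2.zero]
    exact ENNReal.zero_ne_top
  -- T maps top to top
  have hTtop : T topS = topS := by
    obtain ⟨u, hu⟩ := hbij.2 topS
    have h1 : ∀ x, (topS : {p : X → ℝ≥0∞ // IsLscSeminorm p}).1 x ≤ (T topS).1 x := by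
      have h' := (hord u topS).1 (le_topS u)
      rw [hu] at h'
      exact h'
    exact Subtype.ext (funext fun x => le_antisymm (le_topS _ x) (h1 x))
  obtain ⟨f₀, hf₀⟩ := exists_dual_one x₀ hx₀
  set c : {p : X → ℝ≥0∞ // IsLscSeminorm p} :=
    ⟨slabFun f₀ x₀ 0, isLscSeminorm_slabFun f₀ x₀ 0 le_rfl⟩ with hc_def
  have hc_ne : c ≠ topS := slab_ne_topS hx₀ _
  obtain ⟨d, hd⟩ := hbij.2 c
  have hd_ne : d ≠ topS := by
    rintro rfl
    exact hc_ne (hd.symm.trans hTtop)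
  have hd_chain : UpperChain d := by
    intro r r' h1 h2
    have hcr : ∀ x, c.1 x ≤ (T r).1 x := by rw [← hd]; exact (hord d r).1 h1
    have hcr' : ∀ x, c.1 x ≤ (T r').1 x := by rw [← hd]; exact (hord d r').1 h2
    rcases upperChain_slab f₀ x₀ 0 _ (T r) (T r') hcr hcr' with h | h
    · exact Or.inl ((hord r r').2 h)
    · exact Or.inr ((hord r' r).2 h)
  obtain ⟨x₁, hx₁0, hx₁fin⟩ := exists_ne_zero_fin d hd_ne
  have hDomd := domain_subset_of_upperChain d hd_chain x₁ hx₁0 hx₁fin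
  obtain ⟨f₁, hf₁⟩ := exists_dual_one x₁ hx₁0
  set c' : {p : X → ℝ≥0∞ // IsLscSeminorm p} :=
    ⟨slabFun f₁ x₁ (p.1 x₁).toReal,
      isLscSeminorm_slabFun f₁ x₁ _ ENNReal.toReal_nonneg⟩ with hc'_def
  have hpc' : ∀ y, p.1 y ≤ c'.1 y := le_slabFun p.2 (hp x₁) hf₁
  have hTp_le_Tc' : ∀ x, (T p).1 x ≤ (T c').1 x := (hord p c').1 hpc'
  have hcomp : (∀ x, d.1 x ≤ c'.1 x) ∨ (∀ x, c'.1 x ≤ d.1 x) := by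
    apply compare_of_top_off_span x₁ d c'
    · intro z hz
      by_contra hne
      exact hz (hDomd z hne)
    · intro z hz
      exact slabFun_top_off hz
  rcases hcomp with h | h
  · -- c = T d ≤ T c'; then (T c') is finite along x₀
    have hce : ∀ x, c.1 x ≤ (T c').1 x := by rw [← hd]; exact (hord d c').1 h
    have he_ne : T c' ≠ topS := by
      intro hh
      exact slab_ne_topS hx₁0 _ (hbij.1 (hh.trans hTtop.symm))
    obtain ⟨w, hw0, hwfin⟩ := exists_ne_zero_fin (T c') he_ne
    have hw_span : w ∈ Submodule.span ℝ ({x₀} : Set X) := by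
      by_contra hz
      have := hce w
      rw [show c.1 w = ⊤ from slabFun_top_off hz] at this
      exact hwfin (top_le_iff.1 this)
    obtain ⟨t, ht⟩ := Submodule.mem_span_singleton.1 hw_span
    have ht0 : t ≠ 0 := by
      rintro rfl
      rw [zero_smul] at ht
      exact hw0 ht.symm
    have hx0w : x₀ = t⁻¹ • w := by rw [← ht, smul_smul, inv_mul_cancel₀ ht0, one_smul]
    have hfin : (T c').1 x₀ ≠ ⊤ := by
      rw [hx0w, (T c').2.2.2]
      exact ENNReal.mul_ne_top ENNReal.ofReal_ne_top hwfin
    exact fun hh => hfin (top_le_iff.1 (hh ▸ hTp_le_Tc' x₀))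
  · have hTc'c : ∀ x, (T c').1 x ≤ c.1 x := by rw [← hd]; exact (hord c' d).1 h
    have h2 : (T p).1 x₀ ≤ c.1 x₀ := (hTp_le_Tc' x₀).trans (hTc'c x₀)
    rw [show c.1 x₀ = ENNReal.ofReal 0 from slabFun_self hf₀] at h2
    simp only [ENNReal.ofReal_zero, nonpos_iff_eq_zero] at h2
    rw [h2]
    exact ENNReal.zero_ne_top
end

section
/- Let X be a real Banach space, x*, x₀* ∈ X* linearly independent. Then the segment [−x*, x*] = { λ x* : −1 ≤ λ ≤ 1 } equals the intersection of the line ℝ x* with the convex hull of (ℝ(x* − x₀*)) ∪ [−x₀*, x₀*]; more precisely, [−x*, x*] = (ℝ x*) ∩ co( ℝ(x* − x₀*) ∪ [−x₀*, x₀*] ) where co denotes convex hull taken inside the 2-dimensional span of x* and x₀* (equivalently, the weak*-closed convex hull). -/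
/-- For linearly independent `x*, x₀*` in `X*`, the segment
`[−x*, x*]` equals the intersection of the line `ℝ x*` with the weak*-closed
convex hull of `ℝ(x* − x₀*) ∪ [−x₀*, x₀*]`. -/
theorem stmt_19 {X : Type*} [NormedAddCommGroup X] [NormedSpace ℝ X] [CompleteSpace X]
    (x' x₀ : WeakDual ℝ X) (hli : LinearIndependent ℝ ![x', x₀]) :
    segment ℝ (-x') x' =
      (Set.range fun r : ℝ => r • x') ∩
        closure (convexHull ℝ
          ((Set.range fun r : ℝ => r • (x' - x₀)) ∪ segment ℝ (-x₀) x₀)) := by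
  set S : Set (WeakDual ℝ X) :=
    (Set.range fun r : ℝ => r • (x' - x₀)) ∪ segment ℝ (-x₀) x₀ with hS
  -- Key separation point: there is `y` with `x' y = x₀ y` and `x₀ y ≠ 0`.
  have key : ∃ y : X, x' y = x₀ y ∧ x₀ y ≠ 0 := by
    by_contra h
    push_neg at h
    have hker : LinearMap.ker ((x' - x₀ : X →L[ℝ] ℝ) : X →ₗ[ℝ] ℝ) ≤
        LinearMap.ker ((x₀ : X →L[ℝ] ℝ) : X →ₗ[ℝ] ℝ) := by
      intro y hy
      simp only [LinearMap.mem_ker, ContinuousLinearMap.coe_coe] at hy ⊢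
      have hy' : x' y - x₀ y = 0 := hy
      exact h y (by linarith)
    have hmem := mem_span_of_iInf_ker_le_ker (ι := Unit)
      (L := fun _ => ((x' - x₀ : X →L[ℝ] ℝ) : X →ₗ[ℝ] ℝ))
      (K := ((x₀ : X →L[ℝ] ℝ) : X →ₗ[ℝ] ℝ)) (by simpa using hker)
    rw [Set.range_const, Submodule.mem_span_singleton] at hmem
    obtain ⟨c, hc⟩ := hmem
    have hfun : ∀ y : X, x₀ y = c * (x' y - x₀ y) := by
      intro y
      have := LinearMap.congr_fun hc y
      simpa [show (x' - x₀) y = x' y - x₀ y from rfl] using this.symm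
    have hzero : c • x' + (-(1 + c)) • x₀ = 0 := by
      refine DFunLike.ext _ _ fun z => ?_
      show c * x' z + (-(1 + c)) * x₀ z = 0
      have := hfun z
      nlinarith [hfun z]
    obtain ⟨hc0, hc1⟩ := LinearIndependent.pair_iff.mp hli c (-(1+c)) hzero
    rw [hc0] at hc1
    norm_num at hc1
  obtain ⟨y, hy, hy0⟩ := key
  apply Set.Subset.antisymm
  · -- `[−x', x'] ⊆ ℝx' ∩ closure (conv S)`
    rintro p ⟨a, b, ha, hb, hab, rfl⟩
    set lam : ℝ := b - a with hlam
    have hpl : a • (-x') + b • x' = lam • x' := by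
      rw [hlam]; module
    rw [hpl]
    have hlam1 : |lam| ≤ 1 := by
      rw [abs_le]; constructor <;> [linarith; linarith]
    constructor
    · exact ⟨lam, rfl⟩
    · -- approximate `lam • x'` by points of the convex hull
      have hmem : ∀ t ∈ Set.Ioo (0:ℝ) 1,
          lam • x' - ((1 - t) * lam) • x₀ ∈ convexHull ℝ S := by
        intro t ht
        obtain ⟨ht0, ht1⟩ := ht
        have h1t : (0:ℝ) < 1 - t := by linarith
        have hA : (lam / (1 - t)) • (x' - x₀) ∈ S :=
          Or.inl ⟨lam / (1 - t), rfl⟩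
        have hB : lam • x₀ ∈ S := by
          refine Or.inr ⟨(1 - lam)/2, (1 + lam)/2, ?_, ?_, by ring, ?_⟩
          · have := (abs_le.mp hlam1).2; linarith
          · have := (abs_le.mp hlam1).1; linarith
          · module
        have hcomb := (convex_convexHull ℝ S) (subset_convexHull ℝ S hA)
          (subset_convexHull ℝ S hB) (le_of_lt h1t) (le_of_lt ht0) (by ring)
        have heq : (1 - t) • ((lam / (1 - t)) • (x' - x₀)) + t • (lam • x₀)
            = lam • x' - ((1 - t) * lam) • x₀ := by
          rw [smul_smul, mul_div_cancel₀ _ (ne_of_gt h1t)]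
          module
        rwa [heq] at hcomb
      have htend : Filter.Tendsto (fun t : ℝ => lam • x' - ((1 - t) * lam) • x₀)
          (nhdsWithin 1 (Set.Iio 1)) (nhds (lam • x')) := by
        have hcont : Continuous (fun t : ℝ => lam • x' - ((1 - t) * lam) • x₀) := by
          apply Continuous.sub continuous_const
          exact Continuous.smul
            ((continuous_const.sub continuous_id).mul continuous_const) continuous_const
        have h2 := (hcont.tendsto 1).mono_left
          (nhdsWithin_le_nhds (s := Set.Iio (1:ℝ)))
        have e : lam • x' - ((1 - (1:ℝ)) * lam) • x₀ = lam • x' := by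
          rw [sub_self, zero_mul, zero_smul, sub_zero]
        rwa [e] at h2
      refine mem_closure_of_tendsto htend ?_
      filter_upwards [Ioo_mem_nhdsLT_of_mem (Set.mem_Ioc.mpr ⟨zero_lt_one, le_refl 1⟩)]
        with t ht using hmem t ht
  · -- reverse inclusion, via the separating evaluation at `y`
    rintro p ⟨⟨r, rfl⟩, hcl⟩
    set C : Set (WeakDual ℝ X) := {g | |g y| ≤ |x₀ y|} with hC
    have hCclosed : IsClosed C := by
      have : C = (fun g : WeakDual ℝ X => g y) ⁻¹' (Set.Icc (-|x₀ y|) (|x₀ y|)) := by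
        ext g; simp [hC, abs_le]
      rw [this]
      exact IsClosed.preimage (WeakDual.eval_continuous y) isClosed_Icc
    have hCconvex : Convex ℝ C := by
      intro g1 h1 g2 h2 a b ha hb hab
      show |(a • g1 + b • g2) y| ≤ |x₀ y|
      have : (a • g1 + b • g2) y = a * g1 y + b * g2 y := rfl
      rw [this]
      have h1' : |g1 y| ≤ |x₀ y| := h1
      have h2' : |g2 y| ≤ |x₀ y| := h2
      calc |a * g1 y + b * g2 y| ≤ |a * g1 y| + |b * g2 y| := abs_add_le _ _
        _ = a * |g1 y| + b * |g2 y| := by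
            rw [abs_mul, abs_mul, abs_of_nonneg ha, abs_of_nonneg hb]
        _ ≤ a * |x₀ y| + b * |x₀ y| :=
            add_le_add (mul_le_mul_of_nonneg_left h1' ha)
              (mul_le_mul_of_nonneg_left h2' hb)
        _ = |x₀ y| := by rw [← add_mul, hab, one_mul]
    have hSC : S ⊆ C := by
      rintro g (⟨s, rfl⟩ | ⟨a, b, ha, hb, hab, rfl⟩)
      · show |(s • (x' - x₀)) y| ≤ |x₀ y|
        have : (s • (x' - x₀)) y = s * (x' y - x₀ y) := rfl
        rw [this, hy]
        simp [abs_nonneg]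
      · show |(a • (-x₀) + b • x₀) y| ≤ |x₀ y|
        have : (a • (-x₀) + b • x₀) y = a * (-(x₀ y)) + b * x₀ y := rfl
        rw [this]
        have : a * (-(x₀ y)) + b * x₀ y = (b - a) * x₀ y := by ring
        rw [this, abs_mul]
        have hba : |b - a| ≤ 1 := by
          rw [abs_le]; constructor <;> [linarith; linarith]
        calc |b - a| * |x₀ y| ≤ 1 * |x₀ y| := by gcongr
          _ = |x₀ y| := one_mul _
    have hsub : closure (convexHull ℝ S) ⊆ C :=
      closure_minimal (convexHull_min hSC hCconvex) hCclosed
    have hrC : |(r • x') y| ≤ |x₀ y| := hsub hcl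
    have hrx : (r • x') y = r * x₀ y := by
      show r * x' y = r * x₀ y
      rw [hy]
    rw [hrx, abs_mul] at hrC
    have hr1 : |r| ≤ 1 := by
      have h0 : 0 < |x₀ y| := abs_pos.mpr hy0
      nlinarith
    obtain ⟨hr1', hr2'⟩ := abs_le.mp hr1
    refine ⟨(1 - r)/2, (1 + r)/2, by linarith, by linarith, by ring, ?_⟩
    module
end
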